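/- In a DAG G with topological order π*, for vertices π*(i), π*(j) with i < j that are non-adjacent, and any path p between them, either every vertex of p other than the endpoints that is a non-collider on p can be blocked by conditioning on predecessors of π*(j), or p contains a collider that is not an ancestor of the conditioning set {π*(1),...,π*(j-1)}\{π*(i)}; hence p does not d-connect π*(i) and π*(j) given that set. -/

import Mathlib

open scoped Classical

/-- A directed acyclic graph on `Fin p`: a finite edge set together with a
topological ordering witnessing acyclicity. -/
structure DAG (p : ℕ) where
  edges : Finset (Fin p × Fin p)
  acyclic : ∃ σ : Equiv.Perm (Fin p), ∀ e ∈ edges, σ.symm e.1 < σ.symm e.2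

namespace DAG

variable {p : ℕ}

def edgeRel (G : DAG p) (a b : Fin p) : Prop := (a, b) ∈ G.edges

/-- adjacency in the skeleton -/
def adj (G : DAG p) (a b : Fin p) : Prop := (a, b) ∈ G.edges ∨ (b, a) ∈ G.edges

/-- the skeleton as a finite set of unordered pairs -/
def skeleton (G : DAG p) : Finset (Sym2 (Fin p)) := G.edges.image (fun e => s(e.1, e.2))

/-- `b` is a collider on a path segment `a - b - c`. -/
def isCollider (G : DAG p) (a b c : Fin p) : Prop := (a, b) ∈ G.edges ∧ (c, b) ∈ G.edges

/-- `b` is in `S` or an ancestor of some element of `S`. -/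
def ancestorOfSet (G : DAG p) (b : Fin p) (S : Finset (Fin p)) : Prop :=
  ∃ s ∈ S, Relation.ReflTransGen G.edgeRel b s

/-- a (simple, undirected) path from `i` to `j` in the skeleton, as a list of vertices -/
def IsTrail (G : DAG p) (i j : Fin p) (l : List (Fin p)) : Prop :=
  l.Chain' G.adj ∧ l.Nodup ∧ 2 ≤ l.length ∧ l.head? = some i ∧ l.getLast? = some j

/-- the path `l` d-connects its endpoints given `S`: every collider on it is in `S` or
has a descendant in `S`, and every non-collider on it is not in `S`. -/
def dConnectsPath (G : DAG p) (S : Finset (Fin p)) (l : List (Fin p)) : Prop :=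
  ∀ a b c : Fin p, [a, b, c] <:+: l →
    (G.isCollider a b c → G.ancestorOfSet b S) ∧ (¬ G.isCollider a b c → b ∉ S)

def dConnected (G : DAG p) (i j : Fin p) (S : Finset (Fin p)) : Prop :=
  ∃ l : List (Fin p), G.IsTrail i j l ∧ G.dConnectsPath S l

def dSep (G : DAG p) (i j : Fin p) (S : Finset (Fin p)) : Prop :=
  i ≠ j ∧ ¬ G.dConnected i j S

end DAG

/-- A (pairwise) conditional independence model: `CI i j S` means
`X_i ⫫ X_j | X_S`. -/
abbrev CIModel (p : ℕ) := Fin p → Fin p → Finset (Fin p) → Prop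

variable {p : ℕ}

/-- `G` is Markov w.r.t. the CI model: every d-separation is a CI statement. -/
def Markov (G : DAG p) (CI : CIModel p) : Prop :=
  ∀ i j S, G.dSep i j S → CI i j S

/-- Markov equivalence: same d-separation statements. -/
def MarkovEquiv (G G' : DAG p) : Prop :=
  ∀ i j S, G.dSep i j S ↔ G'.dSep i j S

/-- `π` is a topological ordering of `G`. -/
def IsTopOrder (G : DAG p) (π : Equiv.Perm (Fin p)) : Prop :=
  ∀ e ∈ G.edges, π.symm e.1 < π.symm e.2

/-- the predecessors `{π 0, …, π (k-1)}` of position `k` in the ordering `π` -/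
def predSet (π : Equiv.Perm (Fin p)) (k : Fin p) : Finset (Fin p) :=
  (Finset.univ.filter (fun m => m < k)).image π

/-- The minimal I-map `G_π`: for `j < k` there is an edge `π j → π k` iff
`π j` and `π k` are conditionally dependent given all other predecessors of `π k`. -/
noncomputable def minimalIMap (CI : CIModel p) (π : Equiv.Perm (Fin p)) : DAG p where
  edges := Finset.univ.filter (fun q : Fin p × Fin p =>
    ∃ j k : Fin p, j < k ∧ q = (π j, π k) ∧ ¬ CI (π j) (π k) ((predSet π k).erase (π j)))
  acyclic := ⟨π, by
    intro e he
    rw [Finset.mem_filter] at he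
    obtain ⟨-, j, k, hjk, rfl, -⟩ := he
    simpa using hjk⟩

/-- the minimal number of edges of a minimal I-map `G_π` over all permutations `π` -/
noncomputable def spScore (CI : CIModel p) : ℕ :=
  ((Finset.univ : Finset (Equiv.Perm (Fin p))).image
    (fun π => (minimalIMap CI π).edges.card)).min' (Finset.univ_nonempty.image _)

/-- adjacency-faithfulness: endpoints of edges of `G` are conditionally dependent
given any conditioning set. -/
def AdjFaithful (G : DAG p) (CI : CIModel p) : Prop :=
  ∀ e ∈ G.edges, ∀ S : Finset (Fin p), e.1 ∉ S → e.2 ∉ S →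
    ¬ CI e.1 e.2 S ∧ ¬ CI e.2 e.1 S

/-- the sparsest Markov representation assumption -/
def SMR (G : DAG p) (CI : CIModel p) : Prop :=
  Markov G CI ∧
    ∀ G' : DAG p, Markov G' CI → ¬ MarkovEquiv G' G → G.edges.card < G'.edges.card

/-- the set of d-separation statements of `G` -/
def DsepSet (G : DAG p) : Set (Fin p × Fin p × Finset (Fin p)) :=
  {t | G.dSep t.1 t.2.1 t.2.2}

/-- P-minimality: no Markov DAG entails strictly more d-separations. -/
def PMinimal (G : DAG p) (CI : CIModel p) : Prop :=
  ∀ G' : DAG p, Markov G' CI → ¬ (DsepSet G ⊂ DsepSet G')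


section Aux

lemma my_getElem_eq {α} (l : List α) {a b : ℕ} (h : a = b) (ha : a < l.length) :
    l[a]'ha = l[b]'(h ▸ ha) := by subst h; rfl

lemma my_triple {α} (l : List α) (m : ℕ) (h1 : 0 < m) (h2 : m + 1 < l.length) :
    [l[m-1]'(by omega), l[m]'(by omega), l[m+1]'h2] <:+: l := by
  have e : m - 1 + 1 = m := by omega
  have e' : l.drop (m-1+1) = l.drop m := by rw [e]
  have hd : l.drop (m-1) = (l[m-1]'(by omega)) :: (l[m]'(by omega)) :: (l[m+1]'h2) :: l.drop (m+2) := by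
    rw [List.drop_eq_getElem_cons (show m-1 < l.length by omega), e',
        List.drop_eq_getElem_cons (show m < l.length by omega),
        List.drop_eq_getElem_cons (show m+1 < l.length by omega)]
  have h3 : [l[m-1]'(by omega), l[m]'(by omega), l[m+1]'h2] <:+: l.drop (m-1) :=
    ⟨[], l.drop (m+2), by simp only [List.nil_append]; rw [hd]; rfl⟩
  exact h3.trans (l.drop_suffix (m-1)).isInfix

lemma my_mem_predSet {p : ℕ} (π : Equiv.Perm (Fin p)) (k b : Fin p) :
    b ∈ predSet π k ↔ π.symm b < k := by
  simp only [predSet, Finset.mem_image, Finset.mem_filter, Finset.mem_univ, true_and]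
  constructor
  · rintro ⟨m, hm, rfl⟩; simpa using hm
  · intro h; exact ⟨π.symm b, h, by simp⟩

lemma my_ord_le {p : ℕ} (G : DAG p) (π : Equiv.Perm (Fin p)) (htop : IsTopOrder G π)
    {a b : Fin p} (h : Relation.ReflTransGen G.edgeRel a b) : π.symm a ≤ π.symm b := by
  induction h with
  | refl => exact le_refl _
  | tail _ h2 ih => exact ih.trans (le_of_lt (htop (_, _) h2))

end Aux

/-- In a DAG with topological order `π`, for non-adjacent `π i`, `π j` with `i < j`
and any path between them, either some non-collider on the path lies in the
predecessor conditioning set `S = {π 0, …, π (j-1)} \ {π i}`, or the path contains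
a collider that is not in `S` nor an ancestor of `S`; hence the path does not
d-connect `π i` and `π j` given `S`. -/
theorem path_blocked_by_predecessors (G : DAG p) (π : Equiv.Perm (Fin p))
    (htop : IsTopOrder G π) (i j : Fin p) (hij : i < j)
    (hnadj : ¬ G.adj (π i) (π j)) (l : List (Fin p))
    (hl : G.IsTrail (π i) (π j) l) :
    ((∃ a b c : Fin p, [a, b, c] <:+: l ∧ ¬ G.isCollider a b c ∧
        b ∈ (predSet π j).erase (π i)) ∨
      (∃ a b c : Fin p, [a, b, c] <:+: l ∧ G.isCollider a b c ∧
        ¬ G.ancestorOfSet b ((predSet π j).erase (π i)))) ∧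
      ¬ G.dConnectsPath ((predSet π j).erase (π i)) l := by
  obtain ⟨hchain, hnodup, hlen2, hhead, hlast⟩ := hl
  have hlpos : 0 < l.length := by omega
  have hne : l ≠ [] := List.ne_nil_of_length_pos hlpos
  have h0 : l[0] = π i := by
    rw [List.head?_eq_head hne] at hhead
    rw [List.getElem_zero]; exact Option.some_injective _ hhead
  have hlastE : l[l.length - 1]'(by omega) = π j := by
    rw [List.getLast?_eq_getLast hne] at hlast
    rw [← List.getLast_eq_getElem hne]; exact Option.some_injective _ hlast
  have hchainE : ∀ (a b : ℕ) (ha : a < l.length) (hb : b < l.length), a + 1 = b →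
      G.adj (l[a]'ha) (l[b]'hb) := by
    intro a b ha hb hab
    subst hab
    have := List.isChain_iff_getElem.mp hchain a (by omega)
    simpa [List.get_eq_getElem] using this
  have hnodupE : ∀ (a b : ℕ) (ha : a < l.length) (hb : b < l.length), l[a] = l[b] → a = b := by
    intro a b ha hb he
    have : (⟨a, ha⟩ : Fin l.length) = ⟨b, hb⟩ :=
      List.nodup_iff_injective_get.mp hnodup (by simpa [List.get_eq_getElem] using he)
    simpa using congrArg Fin.val this
  -- length at least 3
  have hlen3 : 3 ≤ l.length := by
    by_contra hc
    have h2 : l.length = 2 := by omega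
    have hadj := hchainE 0 1 (by omega) (by omega) rfl
    rw [h0] at hadj
    have h1 : l[1]'(by omega) = π j :=
      (my_getElem_eq l (show 1 = l.length - 1 by omega) (by omega)).trans hlastE
    rw [h1] at hadj
    exact hnadj hadj
  -- membership machinery
  have hordS : ∀ b : Fin p, b ≠ π i → π.symm b < j → b ∈ (predSet π j).erase (π i) := by
    intro b h1 h2
    exact Finset.mem_erase.mpr ⟨h1, (my_mem_predSet π j b).mpr h2⟩
  have hancOrd : ∀ b : Fin p, G.ancestorOfSet b ((predSet π j).erase (π i)) → π.symm b < j := by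
    rintro b ⟨s, hs, hr⟩
    exact lt_of_le_of_lt (my_ord_le G π htop hr)
      ((my_mem_predSet π j s).mp (Finset.mem_erase.mp hs).2)
  -- max interior index
  set f : ℕ → ℕ := fun m => (π.symm (l.getD m (π i))).val with hf
  have hfval : ∀ (m : ℕ) (hm : m < l.length), f m = (π.symm (l[m]'hm)).val := by
    intro m hm; simp [hf, List.getElem?_eq_getElem hm]
  obtain ⟨k, hkmem, hkmax⟩ := Finset.exists_max_image (Finset.Ioo 0 (l.length - 1)) f
    ⟨1, Finset.mem_Ioo.mpr (by omega)⟩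
  rw [Finset.mem_Ioo] at hkmem
  have hk1 : 0 < k := hkmem.1
  have hk2 : k < l.length - 1 := hkmem.2
  have hkn : k < l.length := by omega
  have hbne_i : l[k]'hkn ≠ π i := by
    intro h
    have := hnodupE k 0 hkn (by omega) (h.trans h0.symm)
    omega
  have hbne_j : l[k]'hkn ≠ π j := by
    intro h
    have := hnodupE k (l.length - 1) hkn (by omega) (h.trans hlastE.symm)
    omega
  have main : ((∃ a b c : Fin p, [a, b, c] <:+: l ∧ ¬ G.isCollider a b c ∧
        b ∈ (predSet π j).erase (π i)) ∨
      (∃ a b c : Fin p, [a, b, c] <:+: l ∧ G.isCollider a b c ∧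
        ¬ G.ancestorOfSet b ((predSet π j).erase (π i)))) := by
    by_cases hcase : π.symm (l[k]'hkn) < j
    · -- every interior vertex has small order
      have hallint : ∀ (m : ℕ), 0 < m → (hm : m + 1 < l.length) → π.symm (l[m]'(by omega)) < j := by
        intro m hm1 hm2
        have h1 := hkmax m (Finset.mem_Ioo.mpr (by omega))
        rw [hfval m (by omega), hfval k hkn] at h1
        have h2 : (π.symm (l[m]'(by omega))).val < j.val := lt_of_le_of_lt h1 hcase
        exact h2
      by_cases hall : ∀ (m : ℕ), 0 < m → (hm : m + 1 < l.length) →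
          G.isCollider (l[m-1]'(by omega)) (l[m]'(by omega)) (l[m+1]'hm)
      · exfalso
        by_cases h3 : l.length = 3
        · obtain ⟨-, h2⟩ := hall 1 (by omega) (by omega)
          have e2 : (l[1+1]'(by omega)) = π j :=
            (my_getElem_eq l (show 1+1 = l.length - 1 by omega) (by omega)).trans hlastE
          have hlt := htop _ h2
          rw [e2] at hlt
          simp only [Equiv.symm_apply_apply] at hlt
          exact lt_asymm hlt (hallint 1 (by omega) (by omega))
        · obtain ⟨-, h12⟩ := hall 1 (by omega) (by omega)
          obtain ⟨h21, -⟩ := hall 2 (by omega) (by omega)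
          have a1 := htop _ h12
          have a2 := htop _ h21
          exact lt_asymm a1 a2
      · push_neg at hall
        obtain ⟨m, hm1, hm2, hnc⟩ := hall
        left
        refine ⟨l[m-1]'(by omega), l[m]'(by omega), l[m+1]'hm2,
          my_triple l m hm1 hm2, hnc, ?_⟩
        refine hordS _ ?_ (hallint m hm1 hm2)
        intro h
        have := hnodupE m 0 (by omega) (by omega) (h.trans h0.symm)
        omega
    · -- the max-order vertex is a big collider
      have hordb : j < π.symm (l[k]'hkn) := by
        refine lt_of_le_of_ne (not_lt.mp hcase) ?_
        intro h
        exact hbne_j (by rw [h, Equiv.apply_symm_apply])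
      have hstrict : ∀ (m : ℕ) (hm : m < l.length), m ≠ k →
          π.symm (l[m]'hm) < π.symm (l[k]'hkn) := by
        intro m hm hmk
        by_cases hint : 0 < m ∧ m < l.length - 1
        · have h1 := hkmax m (Finset.mem_Ioo.mpr hint)
          rw [hfval m hm, hfval k hkn] at h1
          refine lt_of_le_of_ne h1 ?_
          intro h
          exact hmk (hnodupE m k hm hkn (π.symm.injective h))
        · rcases (show m = 0 ∨ m = l.length - 1 by omega) with rfl | h
          · rw [show (l[0]'hm) = π i from h0]
            simp only [Equiv.symm_apply_apply]
            exact hij.trans hordb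
          · subst h
            rw [show (l[l.length - 1]'hm) = π j from hlastE]
            simp only [Equiv.symm_apply_apply]
            exact hordb
      have hlta := hstrict (k-1) (by omega) (by omega)
      have hltc := hstrict (k+1) (by omega) (by omega)
      have ha1 : G.adj (l[k-1]'(by omega)) (l[k]'hkn) :=
        hchainE (k-1) k (by omega) hkn (by omega)
      have ha2 : G.adj (l[k]'hkn) (l[k+1]'(by omega)) :=
        hchainE k (k+1) hkn (by omega) rfl
      have he1 : ((l[k-1]'(by omega)), (l[k]'hkn)) ∈ G.edges := by
        rcases ha1 with h | h
        · exact h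
        · exact absurd (htop _ h) (lt_asymm hlta)
      have he2 : ((l[k+1]'(by omega)), (l[k]'hkn)) ∈ G.edges := by
        rcases ha2 with h | h
        · exact absurd (htop _ h) (lt_asymm hltc)
        · exact h
      right
      refine ⟨l[k-1]'(by omega), l[k]'hkn, l[k+1]'(by omega),
        my_triple l k hk1 (by omega), ⟨he1, he2⟩, ?_⟩
      intro hanc
      exact lt_asymm hordb (hancOrd _ hanc)
  refine ⟨main, ?_⟩
  intro hdc
  rcases main with ⟨a, b, c, hinf, hnc, hbS⟩ | ⟨a, b, c, hinf, hc, hna⟩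
  · exact (hdc a b c hinf).2 hnc hbS
  · exact hna ((hdc a b c hinf).1 hc)
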